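/- Let A = [A_1, A_2, …, A_n] be an n×n×n alternating sign hypermatrix. For each k with 1 ≤ k ≤ n, the partial sum A^(k) = A_1 + A_2 + … + A_k is a (0,1)-matrix with exactly k ones in every row and every column; in particular A^(k+1) has exactly n more ones than A^(k). -/

import Mathlib

open Finset

/-- A line (vector) of integers is "alternating" in the ASM sense:
all prefix sums are 0 or 1, and the total sum is 1. This is equivalent to the
nonzero entries being ±1, alternating in sign, beginning and ending with +1. -/
def AltLine {n : ℕ} (v : Fin n → ℤ) : Prop :=
  (∀ t : Fin n, (∑ s ∈ Finset.univ.filter (fun s => s ≤ t), v s) = 0 ∨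
      (∑ s ∈ Finset.univ.filter (fun s => s ≤ t), v s) = 1) ∧
  (∑ s, v s) = 1

/-- Alternating sign matrix. -/
def IsAsm {n : ℕ} (A : Matrix (Fin n) (Fin n) ℤ) : Prop :=
  (∀ i, AltLine (fun j => A i j)) ∧ (∀ j, AltLine (fun i => A i j))

/-- Alternating sign hypermatrix: every line in each of the three directions alternates. -/
def IsAshm {n : ℕ} (A : Fin n → Fin n → Fin n → ℤ) : Prop :=
  (∀ j k, AltLine (fun i => A i j k)) ∧
  (∀ i k, AltLine (fun j => A i j k)) ∧
  (∀ i j, AltLine (fun k => A i j k))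

/-- The ASHM-Latin square `L(A) = 1·A₁ + 2·A₂ + ⋯ + n·Aₙ` (planes indexed from 1). -/
def Lmat {n : ℕ} (A : Fin n → Fin n → Fin n → ℤ) (i j : Fin n) : ℤ :=
  ∑ k : Fin n, ((k.1 : ℤ) + 1) * A i j k

theorem stmt1 {n : ℕ} (A : Fin n → Fin n → Fin n → ℤ) (hA : IsAshm A)
    (k : ℕ) (hk1 : 1 ≤ k) (hkn : k ≤ n) :
    (∀ i j : Fin n,
        (∑ s ∈ Finset.univ.filter (fun s : Fin n => s.1 < k), A i j s) = 0 ∨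
        (∑ s ∈ Finset.univ.filter (fun s : Fin n => s.1 < k), A i j s) = 1) ∧
    (∀ i : Fin n,
        (∑ j : Fin n, ∑ s ∈ Finset.univ.filter (fun s : Fin n => s.1 < k), A i j s)
          = (k : ℤ)) ∧
    (∀ j : Fin n,
        (∑ i : Fin n, ∑ s ∈ Finset.univ.filter (fun s : Fin n => s.1 < k), A i j s)
          = (k : ℤ)) ∧
    (Finset.univ.filter (fun p : Fin n × Fin n =>
        (∑ s ∈ Finset.univ.filter (fun s : Fin n => s.1 < k), A p.1 p.2 s) = 1)).card
      = k * n := by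
  obtain ⟨h1, h2, h3⟩ := hA
  have hcard : (Finset.univ.filter (fun s : Fin n => s.1 < k)).card = k := by
    rw [Finset.card_filter,
      Fin.sum_univ_eq_sum_range (fun i => if i < k then (1:ℕ) else 0),
      ← Finset.card_filter]
    have : (Finset.range n).filter (fun i => i < k) = Finset.range k := by
      ext i; simp; omega
    rw [this, Finset.card_range]
  have hentry : ∀ i j : Fin n,
      (∑ s ∈ Finset.univ.filter (fun s : Fin n => s.1 < k), A i j s) = 0 ∨
      (∑ s ∈ Finset.univ.filter (fun s : Fin n => s.1 < k), A i j s) = 1 := by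
    intro i j
    have ht : k - 1 < n := by omega
    have hfilter : (Finset.univ.filter (fun s : Fin n => s.1 < k)) =
        Finset.univ.filter (fun s => s ≤ (⟨k - 1, ht⟩ : Fin n)) := by
      ext s; simp [Fin.le_def]; omega
    rw [hfilter]; exact (h3 i j).1 ⟨k - 1, ht⟩
  have hrow : ∀ i : Fin n,
      (∑ j : Fin n, ∑ s ∈ Finset.univ.filter (fun s : Fin n => s.1 < k), A i j s)
        = (k : ℤ) := by
    intro i
    rw [Finset.sum_comm]
    have : ∀ s ∈ Finset.univ.filter (fun s : Fin n => s.1 < k),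
        (∑ j : Fin n, A i j s) = 1 := fun s _ => (h2 i s).2
    rw [Finset.sum_congr rfl this, Finset.sum_const, hcard]
    simp
  have hcol : ∀ j : Fin n,
      (∑ i : Fin n, ∑ s ∈ Finset.univ.filter (fun s : Fin n => s.1 < k), A i j s)
        = (k : ℤ) := by
    intro j
    rw [Finset.sum_comm]
    have : ∀ s ∈ Finset.univ.filter (fun s : Fin n => s.1 < k),
        (∑ i : Fin n, A i j s) = 1 := fun s _ => (h1 j s).2
    rw [Finset.sum_congr rfl this, Finset.sum_const, hcard]
    simp
  refine ⟨hentry, hrow, hcol, ?_⟩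
  set f : Fin n × Fin n → ℤ :=
    fun p => ∑ s ∈ Finset.univ.filter (fun s : Fin n => s.1 < k), A p.1 p.2 s with hf
  have htot : (∑ p : Fin n × Fin n, f p) = (n : ℤ) * k := by
    rw [Fintype.sum_prod_type]
    have : ∀ i : Fin n, (∑ j : Fin n, f (i, j)) = (k : ℤ) := fun i => hrow i
    rw [Finset.sum_congr rfl (fun i _ => this i), Finset.sum_const]
    simp [mul_comm]
  have hsplit : (∑ p : Fin n × Fin n, f p) =
      ((Finset.univ.filter (fun p : Fin n × Fin n => f p = 1)).card : ℤ) := by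
    rw [← Finset.sum_filter_add_sum_filter_not Finset.univ (fun p => f p = 1)]
    have e1 : (∑ p ∈ Finset.univ.filter (fun p : Fin n × Fin n => f p = 1), f p)
        = ((Finset.univ.filter (fun p : Fin n × Fin n => f p = 1)).card : ℤ) := by
      rw [Finset.sum_congr rfl (fun p hp => (Finset.mem_filter.mp hp).2),
        Finset.sum_const]; simp
    have e2 : (∑ p ∈ Finset.univ.filter (fun p : Fin n × Fin n => ¬ f p = 1), f p)
        = 0 := by
      apply Finset.sum_eq_zero
      intro p hp
      rcases hentry p.1 p.2 with h | h
      · exact h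
      · exact absurd h (Finset.mem_filter.mp hp).2
    rw [e1, e2, add_zero]
  have : ((Finset.univ.filter (fun p : Fin n × Fin n => f p = 1)).card : ℤ)
      = (k * n : ℕ) := by
    rw [← hsplit, htot]; push_cast; ring
  exact_mod_cast this
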